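/- Let A be a finite-dimensional algebra over a field k, S_i a simple A-module with projective cover P_i, and suppose Ext^1_A(S_i, S_i) = 0 and moreover there is no oriented cycle through vertex i in the Ext-quiver of A. Then the endomorphism algebra End_A(P_i) is isomorphic to End_A(S_i), hence is a division algebra. -/

import Mathlib

universe u v

open CategoryTheory

/-- `Ext^1_B(S, T) ≠ 0`: there exists a short exact sequence
`0 → T → E → S → 0` of `B`-modules which does not split. -/
def HasNontrivialExt (B : Type u) [Ring B] (S T : ModuleCat.{v} B) : Prop :=
  ∃ (E : ModuleCat.{v} B) (f : T →ₗ[B] E) (g : E →ₗ[B] S),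
    Function.Injective f ∧ Function.Surjective g ∧
      LinearMap.range f = LinearMap.ker g ∧
        ∀ s : S →ₗ[B] E, g ∘ₗ s ≠ LinearMap.id

open LinearMap Submodule Module Function

theorem key {k A : Type u} [Field k] [Ring A] [Algebra k A] {ι : Type}
    (S : ι → ModuleCat.{v} A) (hsimple : ∀ i, IsSimpleModule A (S i))
    (hall : ∀ U : ModuleCat.{v} A, IsSimpleModule A U → ∃ i, Nonempty (U ≃ₗ[A] S i))
    (n : ℕ) :
    ∀ (M : Type v) [AddCommGroup M] [Module A M] [Module k M]
      [IsScalarTower k A M] [FiniteDimensional k M],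
      finrank k M ≤ n → ∀ (a b : ι) (q : M →ₗ[A] S a), Surjective q →
      (∀ X : Submodule A M, X ⊔ LinearMap.ker q = ⊤ → X = ⊤) →
      ∀ (N : Submodule A M), N ≤ LinearMap.ker q →
      ∀ r : ↥N →ₗ[A] ↥(S b), Surjective r →
      Relation.TransGen (fun a b => HasNontrivialExt A (S a) (S b)) a b := by
  induction n with
  | zero =>
    intro M _ _ _ _ _ hn a b q hq hsm N hN r hr
    exfalso
    haveI : Nontrivial (S b) := IsSimpleModule.nontrivial A _
    obtain ⟨y, hy⟩ := exists_ne (0 : S b)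
    obtain ⟨x, hx⟩ := hr y
    have hx0 : (x : M) ≠ 0 := by
      intro h
      apply hy
      rw [← hx]
      have : x = 0 := Subtype.ext h
      rw [this, map_zero]
    have : Nontrivial M := ⟨_, _, hx0⟩
    have := Module.finrank_pos_iff (R := k) (M := M) |>.2 this
    omega
  | succ n IH =>
    intro M _ _ _ _ _ hn a b q hq hsm N hN r hr
    haveI : Nontrivial (S b) := IsSimpleModule.nontrivial A _
    haveI : Nontrivial (S a) := IsSimpleModule.nontrivial A _
    haveI : IsSimpleModule A ↥(S b) := hsimple b
    have hkerq_ne : LinearMap.ker q ≠ ⊤ := by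
      obtain ⟨y, hy⟩ := exists_ne (0 : S a)
      obtain ⟨x, hx⟩ := hq y
      intro h
      have : x ∈ LinearMap.ker q := h ▸ mem_top
      exact hy (hx ▸ this)
    haveI : IsNoetherian A M := isNoetherian_of_tower k inferInstance
    -- the submodule W = ker r, pushed into M
    set W : Submodule A M := (LinearMap.ker r).map N.subtype with hW
    have hWN : W ≤ N := map_subtype_le _ _
    obtain ⟨C, hC, hCmax⟩ := set_has_maximal_iff_noetherian.2 inferInstance
      {C : Submodule A M | C ≤ LinearMap.ker q ∧ C ⊓ N = W}
      ⟨W, ⟨hWN.trans hN, inf_eq_left.2 hWN⟩⟩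
    obtain ⟨hCq, hCN⟩ := hC
    set π := C.mkQ with hπ
    set q' : (M ⧸ C) →ₗ[A] S a := C.liftQ q hCq with hq'
    have hq'surj : Surjective q' := by
      intro y; obtain ⟨x, hx⟩ := hq y; exact ⟨π x, hx⟩
    have hkerq' : LinearMap.ker q' = (LinearMap.ker q).map π := C.ker_liftQ q hCq
    have hkerq'_ne : LinearMap.ker q' ≠ ⊤ := by
      obtain ⟨y, hy⟩ := exists_ne (0 : S a)
      obtain ⟨x, hx⟩ := hq'surj y
      intro h
      have : x ∈ LinearMap.ker q' := h ▸ mem_top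
      exact hy (hx ▸ this)
    have hsm' : ∀ X : Submodule A (M ⧸ C), X ⊔ LinearMap.ker q' = ⊤ → X = ⊤ := by
      intro X hX
      have h1 : X.comap π ⊔ LinearMap.ker q = ⊤ := by
        rw [eq_top_iff]; rintro m -
        have hm : π m ∈ X ⊔ LinearMap.ker q' := hX ▸ mem_top
        obtain ⟨x, hx, z, hz, hxz⟩ := mem_sup.1 hm
        rw [hkerq'] at hz
        obtain ⟨t, ht, rfl⟩ := hz
        refine mem_sup.2 ⟨m - t, ?_, t, ht, by abel⟩
        show π (m - t) ∈ X
        rw [map_sub, ← hxz]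
        simpa using hx
      have h2 := hsm _ h1
      have h3 : X = (X.comap π).map π := by
        rw [Submodule.map_comap_eq, Submodule.range_mkQ, top_inf_eq]
      rw [h3, h2, Submodule.map_top, Submodule.range_mkQ]
    -- the image of N
    set Nb : Submodule A (M ⧸ C) := N.map π with hNbdef
    let φ : ↥N →ₗ[A] ↥Nb := LinearMap.codRestrict Nb (π ∘ₗ N.subtype)
      (fun x => Submodule.mem_map_of_mem x.2)
    have hφsurj : Surjective φ := by
      rintro ⟨y, hy⟩
      obtain ⟨x, hx, rfl⟩ := hy
      exact ⟨⟨x, hx⟩, rfl⟩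
    have hkerφ : LinearMap.ker φ = LinearMap.ker r := by
      ext x
      simp only [LinearMap.mem_ker]
      constructor
      · intro h
        have h1 : π (x : M) = 0 := congrArg Subtype.val h
        have h2 : (x : M) ∈ C := by
          rwa [hπ, Submodule.mkQ_apply, Submodule.Quotient.mk_eq_zero] at h1
        have h3 : (x : M) ∈ C ⊓ N := ⟨h2, x.2⟩
        rw [hCN] at h3
        obtain ⟨y, hy, hyx⟩ := h3
        have hxy : y = x := Subtype.ext hyx
        rw [← hxy]; exact hy
      · intro h
        have h1 : (x : M) ∈ W := ⟨x, h, rfl⟩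
        have h2 : (x : M) ∈ C := by rw [← hCN] at h1; exact h1.1
        apply Subtype.ext
        show π (x : M) = 0
        rw [hπ, Submodule.mkQ_apply, Submodule.Quotient.mk_eq_zero]
        exact h2
    -- Nb is simple, isomorphic to S b
    let eq1 := φ.quotKerEquivOfSurjective hφsurj
    let r' : (↥N ⧸ LinearMap.ker φ) →ₗ[A] S b := (LinearMap.ker φ).liftQ r hkerφ.le
    have hr'inj : Injective r' := by
      rw [← LinearMap.ker_eq_bot, Submodule.ker_liftQ, ← hkerφ]
      refine le_bot_iff.1 ?_
      rw [Submodule.map_le_iff_le_comap]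
      intro x hx
      simp only [Submodule.mem_comap, Submodule.mkQ_apply, Submodule.mem_bot,
        Submodule.Quotient.mk_eq_zero]
      exact hx
    have hr'surj : Surjective r' := by
      intro y; obtain ⟨x, hx⟩ := hr y
      exact ⟨Submodule.Quotient.mk x, hx⟩
    let e' : ↥Nb ≃ₗ[A] ↥(S b) := LinearEquiv.ofBijective (r' ∘ₗ (eq1.symm : ↥Nb →ₗ[A] _))
      ⟨hr'inj.comp eq1.symm.injective, hr'surj.comp eq1.symm.surjective⟩
    haveI hNbsimple : IsSimpleModule A ↥Nb := IsSimpleModule.congr e'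
    have hatom : IsAtom Nb := isSimpleModule_iff_isAtom.1 hNbsimple
    have hNbker : Nb ≤ LinearMap.ker q' := by rw [hkerq']; exact Submodule.map_mono hN
    have hess : ∀ X : Submodule A (M ⧸ C), X ≤ LinearMap.ker q' → X ≠ ⊥ → Nb ≤ X := by
      intro X hXq hXbot
      have hX'q : X.comap π ≤ LinearMap.ker q := by
        have h1 : X.comap π ≤ (LinearMap.ker q').comap π := Submodule.comap_mono hXq
        have h2 : (LinearMap.ker q').comap π = LinearMap.ker (q' ∘ₗ π) :=
          (LinearMap.ker_comp _ _).symm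
        have h3 : q' ∘ₗ π = q := C.liftQ_mkQ q hCq
        rwa [h2, h3] at h1
      have hCX : C ≤ X.comap π := by
        intro x hx
        show π x ∈ X
        have : π x = 0 := by
          rw [hπ, Submodule.mkQ_apply, Submodule.Quotient.mk_eq_zero]; exact hx
        rw [this]; exact X.zero_mem
      have hne : X.comap π ≠ C := by
        intro h
        apply hXbot
        have h3 : X = (X.comap π).map π := by
          rw [Submodule.map_comap_eq, Submodule.range_mkQ, top_inf_eq]
        rw [h3, h]
        refine le_bot_iff.1 ?_
        rw [Submodule.map_le_iff_le_comap]
        intro x hx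
        simp only [Submodule.mem_comap, hπ, Submodule.mkQ_apply, Submodule.mem_bot,
          Submodule.Quotient.mk_eq_zero]
        exact hx
      have hnotin : ¬ (X.comap π ⊓ N = W) := by
        intro hmem
        exact hCmax (X.comap π) ⟨hX'q, hmem⟩ (lt_of_le_of_ne hCX (Ne.symm hne)) |>.elim
      have hWC : W ≤ C := (le_of_eq hCN.symm).trans inf_le_left
      have hWle : W ≤ X.comap π ⊓ N := le_inf (hWC.trans hCX) hWN
      have hnotle : ¬ (X.comap π ⊓ N ≤ W) := fun hle => hnotin (le_antisymm hle hWle)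
      obtain ⟨x, hx, hxW⟩ := SetLike.not_le_iff_exists.1 hnotle
      have hπx : π x ∈ X ⊓ Nb := ⟨hx.1, Submodule.mem_map_of_mem hx.2⟩
      have hπx0 : π x ≠ 0 := by
        intro h
        have hxC : x ∈ C := by
          rwa [hπ, Submodule.mkQ_apply, Submodule.Quotient.mk_eq_zero] at h
        exact hxW (hCN ▸ (⟨hxC, hx.2⟩ : x ∈ C ⊓ N))
      have hinf : Nb ⊓ X ≠ ⊥ := by
        intro h
        apply hπx0
        have h2 : π x ∈ Nb ⊓ X := ⟨hπx.2, hπx.1⟩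
        rw [h] at h2
        simpa using h2
      rcases (inf_le_left : Nb ⊓ X ≤ Nb).lt_or_eq with hlt | heq
      · exact absurd (hatom.2 _ hlt) hinf
      · rw [← heq]; exact inf_le_right
    by_cases hTN : LinearMap.ker q' = Nb
    · refine Relation.TransGen.single ?_
      refine ⟨ModuleCat.of A (M ⧸ C), Nb.subtype ∘ₗ (e'.symm : ↥(S b) →ₗ[A] ↥Nb), q', ?_,
        hq'surj, ?_, ?_⟩
      · exact (Submodule.injective_subtype Nb).comp e'.symm.injective
      · rw [LinearMap.range_comp, LinearEquiv.range, Submodule.map_top, Submodule.range_subtype,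
          hTN]
      · intro s hs
        have hrs : ∀ y, q' (s y) = y := fun y => by
          have h0 := congrArg (fun (h : ↥(S a) →ₗ[A] ↥(S a)) => h y) hs
          simpa using h0
        have hXtop : LinearMap.range s ⊔ LinearMap.ker q' = ⊤ := by
          rw [eq_top_iff]; rintro m -
          refine mem_sup.2 ⟨s (q' m), ⟨_, rfl⟩, m - s (q' m), ?_, by abel⟩
          rw [LinearMap.mem_ker, map_sub, sub_eq_zero]
          exact (hrs _).symm
        have h2 := hsm' _ hXtop
        have hker0 : LinearMap.ker q' = ⊥ := by
          rw [eq_bot_iff]; intro t ht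
          have h3 : t ∈ LinearMap.range s := by rw [h2]; exact mem_top
          obtain ⟨y, rfl⟩ := h3
          have h4 : y = 0 := by rw [← hrs y]; exact ht
          rw [h4, map_zero]
          exact (Submodule.mem_bot _).2 rfl
        exact hatom.1 (by rw [← hTN]; exact hker0)
    · have hNbltT : Nb < LinearMap.ker q' := lt_of_le_of_ne hNbker (fun h => hTN h.symm)
      haveI hfinQ : Module.Finite k (M ⧸ C) :=
        Module.Finite.of_surjective (π.restrictScalars k) (Submodule.mkQ_surjective C)
      haveI : IsNoetherian A (M ⧸ C) := isNoetherian_of_tower k inferInstance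
      haveI : IsArtinian A (M ⧸ C) := isArtinian_of_tower k inferInstance
      obtain ⟨T', hT'mem, hT'max⟩ := set_has_maximal_iff_noetherian.2 inferInstance
        {X : Submodule A (M ⧸ C) | X < LinearMap.ker q'}
        ⟨⊥, bot_lt_iff_ne_bot.2 (fun h => hatom.1 (le_bot_iff.1 (h ▸ hNbker)))⟩
      have hT'lt : T' < LinearMap.ker q' := hT'mem
      have hT'cov : ∀ X, T' < X → X ≤ LinearMap.ker q' → X = LinearMap.ker q' := by
        intro X h1 h2
        rcases h2.lt_or_eq with h3 | h3
        · exact absurd h1 (hT'max X h3)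
        · exact h3
      have hT'bot : T' ≠ ⊥ := by
        intro h
        apply hTN
        exact (hT'cov Nb (h ▸ bot_lt_iff_ne_bot.2 hatom.1) hNbker).symm
      have hNT' : Nb ≤ T' := hess T' hT'lt.le hT'bot
      have hcov : T' ⋖ LinearMap.ker q' :=
        ⟨hT'lt, fun X h1 h2 => absurd (hT'cov X h1 h2.le) (ne_of_lt h2)⟩
      set T : Submodule A (M ⧸ C) := LinearMap.ker q' with hTdef
      have hsimpleQ := (covBy_iff_quot_is_simple hT'lt.le).1 hcov
      obtain ⟨c, hc⟩ := hall (ModuleCat.of A (↥T ⧸ Submodule.comap T.subtype T')) hsimpleQ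
      obtain ⟨ec0⟩ := hc
      have ec : (↥T ⧸ Submodule.comap T.subtype T') ≃ₗ[A] ↥(S c) := ec0
      set ρ := T'.mkQ with hρ
      set g : ((M ⧸ C) ⧸ T') →ₗ[A] S a := T'.liftQ q' hT'lt.le with hg
      have hgρ : ∀ m, g (ρ m) = q' m := fun m => rfl
      let ι : (↥T ⧸ Submodule.comap T.subtype T') →ₗ[A] ((M ⧸ C) ⧸ T') :=
        (Submodule.comap T.subtype T').liftQ (ρ ∘ₗ T.subtype)
          (by intro x hx
              simp only [LinearMap.mem_ker, LinearMap.comp_apply, Submodule.coe_subtype, hρ,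
                Submodule.mkQ_apply, Submodule.Quotient.mk_eq_zero]
              exact hx)
      have hιinj : Injective ι := by
        rw [← LinearMap.ker_eq_bot, Submodule.ker_liftQ]
        refine le_bot_iff.1 ?_
        rw [Submodule.map_le_iff_le_comap]
        intro x hx
        simp only [LinearMap.mem_ker, LinearMap.comp_apply, Submodule.coe_subtype, hρ,
          Submodule.mkQ_apply, Submodule.Quotient.mk_eq_zero] at hx
        simp only [Submodule.mem_comap, Submodule.mkQ_apply, Submodule.mem_bot,
          Submodule.Quotient.mk_eq_zero]
        exact hx
      have hrangeι : LinearMap.range ι = T.map ρ := by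
        rw [Submodule.range_liftQ, LinearMap.range_comp, Submodule.range_subtype]
      have hkerg : LinearMap.ker g = T.map ρ := T'.ker_liftQ q' hT'lt.le
      have harrow : HasNontrivialExt A (S a) (S c) := by
        refine ⟨ModuleCat.of A ((M ⧸ C) ⧸ T'), ι ∘ₗ ec.symm.toLinearMap, g,
          hιinj.comp ec.symm.injective, ?_, ?_, ?_⟩
        · intro y; obtain ⟨m, hm⟩ := hq'surj y; exact ⟨ρ m, hm⟩
        · rw [LinearMap.range_comp, LinearEquiv.range, Submodule.map_top, hrangeι, hkerg]
        · intro s0 hs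
          let s : ↥(S a) →ₗ[A] ((M ⧸ C) ⧸ T') := s0
          have hrs : ∀ y, g (s y) = y := fun y => by
            have h0 := congrArg (fun (h : ↥(S a) →ₗ[A] ↥(S a)) => h y) hs
            simpa using h0
          have hXtop : (LinearMap.range s).comap ρ ⊔ T = ⊤ := by
            rw [eq_top_iff]; rintro m -
            have h1 : ρ m - s (q' m) ∈ LinearMap.ker g := by
              rw [LinearMap.mem_ker, map_sub, sub_eq_zero, hrs]
              exact (hgρ m).symm
            rw [hkerg] at h1
            obtain ⟨t, ht, h2⟩ := h1
            refine mem_sup.2 ⟨m - t, ?_, t, ht, by abel⟩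
            show ρ (m - t) ∈ LinearMap.range s
            refine ⟨q' m, ?_⟩
            rw [map_sub, h2, sub_sub_cancel]
          have h2 := hsm' _ hXtop
          have hssurj : Surjective s := by
            intro z
            obtain ⟨m, rfl⟩ := Submodule.mkQ_surjective T' z
            have h3 : m ∈ (LinearMap.range s).comap ρ := by rw [h2]; exact mem_top
            exact h3
          have h4 : T.map ρ = ⊥ := by
            rw [← hkerg, eq_bot_iff]
            intro z hz
            obtain ⟨y, rfl⟩ := hssurj z
            have h5 : y = 0 := by rw [← hrs y]; exact hz
            rw [h5, map_zero]
            exact (Submodule.mem_bot _).2 rfl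
          have h5 : T ≤ T' := by
            intro t ht
            have h6 : ρ t ∈ T.map ρ := Submodule.mem_map_of_mem ht
            rw [h4] at h6
            have h7 : ρ t = 0 := (Submodule.mem_bot _).1 h6
            rwa [hρ, Submodule.mkQ_apply, Submodule.Quotient.mk_eq_zero] at h7
          exact (ne_of_lt hT'lt) (le_antisymm hT'lt.le h5)
      obtain ⟨V, hVmem, hVmin⟩ := IsArtinian.set_has_minimal
        {V : Submodule A (M ⧸ C) | V ≤ T ∧ V ⊔ T' = T} ⟨T, le_rfl, sup_eq_left.2 hT'lt.le⟩
      obtain ⟨hVT, hVsup⟩ := hVmem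
      have hVbot : V ≠ ⊥ := by
        intro h
        rw [h, bot_sup_eq] at hVsup
        exact (ne_of_lt hT'lt) hVsup
      have hNV : Nb ≤ V := hess V hVT hVbot
      set v1 : ↥V →ₗ[A] (↥T ⧸ Submodule.comap T.subtype T') :=
        (Submodule.comap T.subtype T').mkQ ∘ₗ Submodule.inclusion hVT with hv1
      set v : ↥V →ₗ[A] ↥(S c) := ec.toLinearMap ∘ₗ v1 with hv
      have hv1surj : Surjective v1 := by
        intro z
        obtain ⟨t, rfl⟩ := Submodule.mkQ_surjective _ z
        have ht2 : (t : M ⧸ C) ∈ V ⊔ T' := by rw [hVsup]; exact t.2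
        obtain ⟨x, hx, y, hy, hxy⟩ := mem_sup.1 ht2
        refine ⟨⟨x, hx⟩, ?_⟩
        show Submodule.Quotient.mk (Submodule.inclusion hVT ⟨x, hx⟩) = Submodule.Quotient.mk t
        rw [Submodule.Quotient.eq]
        show Submodule.inclusion hVT ⟨x, hx⟩ - t ∈ Submodule.comap T.subtype T'
        rw [Submodule.mem_comap]
        have hval : (T.subtype (Submodule.inclusion hVT ⟨x, hx⟩ - t) : M ⧸ C)
            = x - (t : M ⧸ C) := rfl
        rw [hval]
        have h8 : x - (t : M ⧸ C) = -y := by rw [← hxy]; abel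
        rw [h8]
        exact neg_mem hy
      have hvsurj : Surjective v := ec.surjective.comp hv1surj
      have hkerv : LinearMap.ker v = Submodule.comap V.subtype T' := by
        ext x
        constructor
        · intro hx
          have h1 : ec (v1 x) = 0 := hx
          have h2 : v1 x = 0 := by
            have := ec.map_eq_zero_iff.1 h1
            exact this
          have h3 : Submodule.inclusion hVT x ∈ Submodule.comap T.subtype T' := by
            rwa [← Submodule.Quotient.mk_eq_zero]
          exact h3
        · intro hx
          have h1 : Submodule.inclusion hVT x ∈ Submodule.comap T.subtype T' := hx
          have h2 : v1 x = 0 := (Submodule.Quotient.mk_eq_zero _).2 h1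
          show ec (v1 x) = 0
          rw [h2, map_zero]
      have hsmv : ∀ X : Submodule A ↥V, X ⊔ LinearMap.ker v = ⊤ → X = ⊤ := by
        intro X hX
        have hXV : X.map V.subtype ⊔ T' = T := by
          apply le_antisymm
          · exact sup_le ((Submodule.map_subtype_le _ _).trans hVT) hT'lt.le
          · intro t ht
            have htV : t ∈ V ⊔ T' := by rw [hVsup]; exact ht
            obtain ⟨x, hx, y, hy, hxy⟩ := mem_sup.1 htV
            have hxm : (⟨x, hx⟩ : ↥V) ∈ X ⊔ LinearMap.ker v := by rw [hX]; exact mem_top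
            obtain ⟨ξ, hξ, w, hw, hξw⟩ := mem_sup.1 hxm
            rw [hkerv] at hw
            refine mem_sup.2 ⟨(ξ : M ⧸ C), Submodule.mem_map_of_mem hξ, (w : M ⧸ C) + y,
              add_mem hw hy, ?_⟩
            have hval : ((ξ + w : ↥V) : M ⧸ C) = x := congrArg Subtype.val hξw
            have hval2 : (ξ : M ⧸ C) + (w : M ⧸ C) = x := by rw [← hval]; rfl
            rw [← hxy, ← hval2]
            abel
        have hle : X.map V.subtype ≤ V := Submodule.map_subtype_le _ _
        have heq : X.map V.subtype = V := by
          rcases hle.lt_or_eq with h1 | h1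
          · exact absurd h1 (hVmin _ ⟨hle.trans hVT, hXV⟩)
          · exact h1
        apply Submodule.map_injective_of_injective (Submodule.injective_subtype V)
        rw [Submodule.map_top, Submodule.range_subtype, heq]
      set NV : Submodule A ↥V := Nb.comap V.subtype with hNV2
      have hNVker : NV ≤ LinearMap.ker v := by rw [hkerv]; exact Submodule.comap_mono hNT'
      let j : ↥NV →ₗ[A] ↥Nb := LinearMap.codRestrict Nb (V.subtype ∘ₗ NV.subtype) (fun x => x.2)
      have hjsurj : Surjective j := by
        rintro ⟨y, hy⟩
        exact ⟨⟨⟨y, hNV hy⟩, hy⟩, rfl⟩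
      let rV : ↥NV →ₗ[A] ↥(S b) := (e' : ↥Nb →ₗ[A] ↥(S b)) ∘ₗ j
      have hrVsurj : Surjective rV := e'.surjective.comp hjsurj
      haveI : Module.Finite k ↥V :=
        Module.Finite.equiv ((Submodule.restrictScalarsEquiv k A (M ⧸ C) V).restrictScalars k)
      have hd1 : finrank k ↥V < finrank k (M ⧸ C) := by
        have hVne : V.restrictScalars k ≠ ⊤ := by
          intro h
          rw [Submodule.restrictScalars_eq_top_iff] at h
          exact hkerq'_ne (le_antisymm le_top (h ▸ hVT))
        have h1 := Submodule.finrank_lt hVne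
        have h2 : finrank k ↥V = finrank k ↥(V.restrictScalars k) :=
          (LinearEquiv.finrank_eq
            ((Submodule.restrictScalarsEquiv k A (M ⧸ C) V).restrictScalars k)).symm
        rw [h2]
        exact h1
      have hd2 : finrank k (M ⧸ C) ≤ finrank k M := by
        have h1 := LinearMap.finrank_range_le (π.restrictScalars k)
        have h2 : LinearMap.range (π.restrictScalars k) = ⊤ :=
          LinearMap.range_eq_top.2 (Submodule.mkQ_surjective C)
        rwa [h2, finrank_top] at h1
      have hrec := IH ↥V (by omega) c b v hvsurj hsmv NV hNVker rV hrVsurj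
      exact Relation.TransGen.head harrow hrec

/-- Let `A` be a finite-dimensional algebra over a field `k`, `S i` a simple module
with projective cover `P` (a projective module with a surjection `p : P → S i` whose
kernel is superfluous). If `Ext^1_A(S i, S i) = 0` and there is no oriented cycle
through the vertex `i` in the Ext-quiver, then `End_A(P)` is isomorphic to
`End_A(S i)` as a ring, and hence is a division algebra (every nonzero endomorphism
is invertible). -/
theorem end_projCover_iso_end_simple (k : Type u) (A : Type u) [Field k] [Ring A]
    [Algebra k A] [FiniteDimensional k A] (ι : Type) [Fintype ι] (S : ι → ModuleCat.{v} A)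
    (hsimple : ∀ i, IsSimpleModule A (S i))
    (hpairwise : ∀ i j, i ≠ j → IsEmpty (S i ≃ₗ[A] S j))
    (hall : ∀ U : ModuleCat.{v} A, IsSimpleModule A U → ∃ i, Nonempty (U ≃ₗ[A] S i))
    (i : ι) (P : ModuleCat.{v} A) (hP : Module.Projective A P) (p : P →ₗ[A] S i)
    (hsurj : Function.Surjective p)
    (hsmall : ∀ N : Submodule A P, N ⊔ LinearMap.ker p = ⊤ → N = ⊤)
    (hext : ¬ HasNontrivialExt A (S i) (S i))
    (hnocycle : ¬ Relation.TransGen (fun a b => HasNontrivialExt A (S a) (S b)) i i) :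
    Nonempty (Module.End A P ≃+* Module.End A (S i)) ∧
      ∀ f : Module.End A P, f = 0 ∨ IsUnit f := by
  haveI := hP
  haveI : IsSimpleModule A ↥(S i) := hsimple i
  haveI : Nontrivial ↥(S i) := IsSimpleModule.nontrivial A _
  have hspan : ∀ y : ↥(S i), y ≠ 0 → (Submodule.span A {y}) = ⊤ := by
    intro y hy
    rcases eq_bot_or_eq_top (Submodule.span A {y}) with h | h
    · exfalso
      apply hy
      have := h ▸ Submodule.mem_span_singleton_self y
      simpa using this
    · exact h
  have hPfin : Module.Finite A ↥P := by
    obtain ⟨y, hy⟩ := exists_ne (0 : ↥(S i))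
    obtain ⟨x, hx⟩ := hsurj y
    have hsup : Submodule.span A {x} ⊔ LinearMap.ker p = ⊤ := by
      rw [eq_top_iff]; rintro z -
      have hz : p z ∈ Submodule.span A {p x} := by
        rw [hx, hspan y hy]; exact Submodule.mem_top
      obtain ⟨a, ha⟩ := Submodule.mem_span_singleton.1 hz
      refine Submodule.mem_sup.2 ⟨a • x,
        Submodule.smul_mem _ _ (Submodule.mem_span_singleton_self x), z - a • x, ?_, by abel⟩
      rw [LinearMap.mem_ker, map_sub, map_smul, ha, sub_self]
    have htop := hsmall _ hsup
    exact ⟨⟨{x}, by simpa using htop⟩⟩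
  letI : Module k ↥P := Module.compHom ↥P (algebraMap k A)
  haveI : IsScalarTower k A ↥P := ⟨fun x a m => by
    show (x • a) • m = algebraMap k A x • (a • m)
    rw [Algebra.smul_def, mul_smul]⟩
  haveI : FiniteDimensional k ↥P := Module.Finite.trans A ↥P
  have factA : ∀ f : ↥P →ₗ[A] ↥P, LinearMap.ker p ≤ LinearMap.ker (p ∘ₗ f) := by
    intro f
    by_contra hcon
    obtain ⟨x, hx, hpx⟩ := SetLike.not_le_iff_exists.1 hcon
    have hne : p (f x) ≠ 0 := fun h => hpx (by
      rw [LinearMap.mem_ker, LinearMap.comp_apply, h])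
    have hsup : LinearMap.ker (p ∘ₗ f) ⊔ LinearMap.ker p = ⊤ := by
      rw [eq_top_iff]; rintro y -
      have hy : p (f y) ∈ Submodule.span A {p (f x)} := by
        rw [hspan _ hne]; exact Submodule.mem_top
      obtain ⟨a, ha⟩ := Submodule.mem_span_singleton.1 hy
      refine Submodule.mem_sup.2 ⟨y - a • x, ?_, a • x, Submodule.smul_mem _ _ hx, by abel⟩
      simp only [LinearMap.mem_ker, LinearMap.comp_apply, map_sub, map_smul]
      rw [ha, sub_self]
    have htop := hsmall _ hsup
    apply hne
    have : x ∈ LinearMap.ker (p ∘ₗ f) := htop ▸ Submodule.mem_top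
    simpa using this
  have hcancel : ∀ g₁ g₂ : Module.End A ↥(S i), g₁ ∘ₗ p = g₂ ∘ₗ p → g₁ = g₂ := by
    intro g₁ g₂ h
    ext y
    obtain ⟨x, rfl⟩ := hsurj y
    exact congrArg (fun h' : ↥P →ₗ[A] ↥(S i) => h' x) h
  let ep0 : (↥P ⧸ LinearMap.ker p) →ₗ[A] ↥(S i) := (LinearMap.ker p).liftQ p le_rfl
  have hep0inj : Function.Injective ep0 := by
    rw [← LinearMap.ker_eq_bot, Submodule.ker_liftQ]
    refine le_bot_iff.1 ?_
    rw [Submodule.map_le_iff_le_comap]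
    intro x hx
    simp only [Submodule.mem_comap, Submodule.mkQ_apply, Submodule.mem_bot,
      Submodule.Quotient.mk_eq_zero]
    exact hx
  have hep0surj : Function.Surjective ep0 := by
    intro y; obtain ⟨x, hx⟩ := hsurj y; exact ⟨Submodule.Quotient.mk x, hx⟩
  let ep : (↥P ⧸ LinearMap.ker p) ≃ₗ[A] ↥(S i) := LinearEquiv.ofBijective ep0 ⟨hep0inj, hep0surj⟩
  let Φf : Module.End A ↥P → Module.End A ↥(S i) := fun f =>
    ((LinearMap.ker p).liftQ (p ∘ₗ f) (factA f)) ∘ₗ ep.symm.toLinearMap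
  have hkeyP : ∀ (f : Module.End A ↥P) (x : ↥P), Φf f (p x) = p (f x) := by
    intro f x
    have h1 : ep.symm (p x) = Submodule.Quotient.mk x := by
      rw [LinearEquiv.symm_apply_eq]
      rfl
    show ((LinearMap.ker p).liftQ (p ∘ₗ f) (factA f)) (ep.symm (p x)) = p (f x)
    rw [h1]
    rfl
  have hΦinj0 : ∀ f, Φf f = 0 → f = 0 := by
    intro f h0
    have hpf : p ∘ₗ f = 0 := by
      ext x
      have := hkeyP f x
      rw [h0] at this
      simpa using this.symm
    by_contra hf
    have hker : LinearMap.ker f ≤ LinearMap.ker p := by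
      by_contra hcon
      obtain ⟨x, hx, hpx⟩ := SetLike.not_le_iff_exists.1 hcon
      have hsup : LinearMap.ker f ⊔ LinearMap.ker p = ⊤ := by
        rw [eq_top_iff]; rintro y -
        have hy : p y ∈ Submodule.span A {p x} := by
          rw [hspan _ hpx]; exact Submodule.mem_top
        obtain ⟨a, ha⟩ := Submodule.mem_span_singleton.1 hy
        refine Submodule.mem_sup.2 ⟨a • x, Submodule.smul_mem _ _ hx, y - a • x, ?_, by abel⟩
        rw [LinearMap.mem_ker, map_sub, map_smul, ha, sub_self]
      exact hf (LinearMap.ker_eq_top.1 (hsmall _ hsup))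
    have hrange : LinearMap.range f ≤ LinearMap.ker p := LinearMap.range_le_ker_iff.2 hpf
    have hφ : Function.Surjective f.rangeRestrict := f.surjective_rangeRestrict
    have hkerφ : LinearMap.ker f.rangeRestrict = LinearMap.ker f := LinearMap.ker_rangeRestrict f
    let r0 : (↥P ⧸ LinearMap.ker f.rangeRestrict) →ₗ[A] ↥(S i) :=
      (LinearMap.ker f.rangeRestrict).liftQ p (by rw [hkerφ]; exact hker)
    have hr0surj : Function.Surjective r0 := by
      intro y; obtain ⟨x, hx⟩ := hsurj y; exact ⟨Submodule.Quotient.mk x, hx⟩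
    let eqf := f.rangeRestrict.quotKerEquivOfSurjective hφ
    let r : ↥(LinearMap.range f) →ₗ[A] ↥(S i) := r0 ∘ₗ eqf.symm.toLinearMap
    have hrsurj : Function.Surjective r := hr0surj.comp eqf.symm.surjective
    exact hnocycle (key S hsimple hall (Module.finrank k ↥P) ↥P le_rfl i i p hsurj hsmall
      (LinearMap.range f) hrange r hrsurj)
  have hΦsurj : Function.Surjective Φf := by
    intro g
    obtain ⟨h, hh⟩ := Module.projective_lifting_property p (g ∘ₗ p) hsurj
    refine ⟨h, hcancel _ _ ?_⟩
    ext x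
    show Φf h (p x) = g (p x)
    rw [hkeyP]
    exact congrArg (fun t : ↥P →ₗ[A] ↥(S i) => t x) hh
  let Φ : Module.End A ↥P →+* Module.End A ↥(S i) :=
    { toFun := Φf
      map_one' := by
        ext y; obtain ⟨x, rfl⟩ := hsurj y
        show Φf 1 (p x) = p x
        rw [hkeyP]
        rfl
      map_mul' := by
        intro f g
        ext y; obtain ⟨x, rfl⟩ := hsurj y
        show Φf (f * g) (p x) = Φf f (Φf g (p x))
        rw [hkeyP, hkeyP g x, hkeyP]
        rfl
      map_zero' := by
        ext y; obtain ⟨x, rfl⟩ := hsurj y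
        show Φf 0 (p x) = 0
        rw [hkeyP]
        simp
      map_add' := by
        intro f g
        ext y; obtain ⟨x, rfl⟩ := hsurj y
        show Φf (f + g) (p x) = Φf f (p x) + Φf g (p x)
        rw [hkeyP, hkeyP, hkeyP]
        simp }
  have hΦinj : Function.Injective Φ := by
    intro f g h
    have h1 : Φf (f - g) = 0 := by
      have := map_sub Φ f g
      show Φ (f - g) = 0
      rw [this, h, sub_self]
    have := hΦinj0 _ h1
    rwa [sub_eq_zero] at this
  let Ψ : Module.End A ↥P ≃+* Module.End A ↥(S i) := RingEquiv.ofBijective Φ ⟨hΦinj, hΦsurj⟩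
  refine ⟨⟨Ψ⟩, ?_⟩
  intro f
  rcases eq_or_ne f 0 with h | h
  · exact Or.inl h
  · refine Or.inr ?_
    have hg : Φf f ≠ 0 := fun h0 => h (hΦinj0 f h0)
    have hginj : Function.Injective (Φf f) := by
      rw [← LinearMap.ker_eq_bot]
      rcases eq_bot_or_eq_top (LinearMap.ker (Φf f)) with hk | hk
      · exact hk
      · exact absurd (LinearMap.ker_eq_top.1 hk) hg
    have hgsurj : Function.Surjective (Φf f) := by
      rw [← LinearMap.range_eq_top]
      rcases eq_bot_or_eq_top (LinearMap.range (Φf f)) with hk | hk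
      · exact absurd (LinearMap.range_eq_bot.1 hk) hg
      · exact hk
    let eg := LinearEquiv.ofBijective (Φf f) ⟨hginj, hgsurj⟩
    have hU : IsUnit (Φf f) := by
      refine isUnit_iff_exists.2 ⟨eg.symm.toLinearMap, ?_, ?_⟩
      · ext y
        show Φf f (eg.symm y) = y
        exact eg.apply_symm_apply y
      · ext y
        show eg.symm (Φf f y) = y
        exact eg.symm_apply_apply y
    have h2 := hU.map Ψ.symm.toRingHom
    have h3 : Ψ.symm.toRingHom (Φf f) = f := Ψ.symm_apply_apply f
    rwa [h3] at h2
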